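/- Degree and leading coefficient of the numerator polynomial: let m ≥ 2, let z₁,…,z_m be pairwise distinct complex numbers, let μ = (μ₁,…,μ_m) ∈ ℂ^m with μ ≠ 0, and let r be the least natural number such that Σ_{ℓ=1}^m μ_ℓ z_ℓ^r ≠ 0 (so Σ_{ℓ=1}^m μ_ℓ z_ℓ^j = 0 for all 0 ≤ j < r, and r ≤ m−1). Then the polynomial P(X) := Σ_{ℓ=1}^m μ_ℓ · ∏_{ℓ'≠ℓ} (z_{ℓ'} − X) ∈ ℂ[X] has degree exactly m−1−r, and its coefficient of X^{m−1−r} equals (−1)^{m−1} · Σ_{ℓ=1}^m μ_ℓ z_ℓ^r. -/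

import Mathlib

open Finset Polynomial

/-- Degree and leading coefficient of the numerator polynomial: with `z₁,…,z_m` pairwise
distinct, `μ ≠ 0`, and `r` the least natural number with `Σ_ℓ μ_ℓ z_ℓ^r ≠ 0`, the
polynomial `P(X) = Σ_ℓ μ_ℓ ∏_{ℓ'≠ℓ} (z_{ℓ'} - X)` has degree exactly `m-1-r` and its
coefficient of `X^{m-1-r}` equals `(-1)^{m-1} Σ_ℓ μ_ℓ z_ℓ^r`. -/
theorem numerator_polynomial_degree {m : ℕ} (hm : 2 ≤ m) (z μ : Fin m → ℂ)
    (hz : Function.Injective z) (hμ : μ ≠ 0) (r : ℕ)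
    (hr : ∑ ℓ, μ ℓ * z ℓ ^ r ≠ 0) (hrmin : ∀ j < r, ∑ ℓ, μ ℓ * z ℓ ^ j = 0) :
    (∑ ℓ, Polynomial.C (μ ℓ) *
        ∏ ℓ' ∈ Finset.univ.erase ℓ, (Polynomial.C (z ℓ') - Polynomial.X)).degree
        = ((m - 1 - r : ℕ) : WithBot ℕ) ∧
      (∑ ℓ, Polynomial.C (μ ℓ) *
          ∏ ℓ' ∈ Finset.univ.erase ℓ, (Polynomial.C (z ℓ') - Polynomial.X)).coeff (m - 1 - r)
        = (-1) ^ (m - 1) * ∑ ℓ, μ ℓ * z ℓ ^ r := by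
  set Q : Fin m → ℂ[X] := fun ℓ => ∏ ℓ' ∈ Finset.univ.erase ℓ, (C (z ℓ') - X) with hQdef
  set P : ℂ[X] := ∑ ℓ, C (μ ℓ) * Q ℓ with hPdef
  set W : ℂ[X] := ∏ ℓ', (C (z ℓ') - X) with hWdef
  have hfac : ∀ a : ℂ, C a - X = -(X - C a) := fun a => by ring
  have hcard : ∀ ℓ : Fin m, (Finset.univ.erase ℓ).card = m - 1 := fun ℓ => by
    rw [card_erase_of_mem (mem_univ ℓ), card_univ, Fintype.card_fin]
  have hfacne : ∀ a : ℂ, C a - X ≠ 0 := fun a => by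
    rw [hfac]; exact neg_ne_zero.mpr (X_sub_C_ne_zero a)
  have hQdeg : ∀ ℓ, (Q ℓ).natDegree = m - 1 := by
    intro ℓ
    rw [hQdef, natDegree_prod _ _ (fun i _ => hfacne (z i))]
    simp only [hfac, natDegree_neg, natDegree_X_sub_C]
    rw [Finset.sum_const, hcard, smul_eq_mul, mul_one]
  have hQlc : ∀ ℓ, (Q ℓ).coeff (m - 1) = (-1) ^ (m - 1) := by
    intro ℓ
    have h1 : (Q ℓ).coeff (m - 1) = (Q ℓ).leadingCoeff := by
      rw [Polynomial.leadingCoeff, hQdeg ℓ]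
    rw [h1, hQdef, leadingCoeff_prod]
    have : ∀ a : ℂ, (C a - X).leadingCoeff = -1 := fun a => by
      rw [hfac, leadingCoeff_neg, (monic_X_sub_C a).leadingCoeff]
    simp only [this]
    rw [Finset.prod_const, hcard]
  have hQne : ∀ ℓ, Q ℓ ≠ 0 := fun ℓ h => by
    have := hQlc ℓ
    rw [h] at this
    simp only [coeff_zero] at this
    exact pow_ne_zero _ (by norm_num : (-1:ℂ) ≠ 0) this.symm
  have hQdegle : ∀ ℓ, (Q ℓ).degree = ((m - 1 : ℕ) : WithBot ℕ) := fun ℓ => by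
    rw [degree_eq_natDegree (hQne ℓ), hQdeg ℓ]
  -- the shifted sums
  set S : ℕ → ℂ[X] := fun i => ∑ ℓ, C (μ ℓ * z ℓ ^ i) * Q ℓ with hSdef
  have hS0 : S 0 = P := by
    rw [hSdef, hPdef]
    simp [pow_zero, mul_one]
  have hXQ : ∀ ℓ, X * Q ℓ = C (z ℓ) * Q ℓ - W := by
    intro ℓ
    have hW : W = (C (z ℓ) - X) * Q ℓ := by
      rw [hWdef, hQdef, ← Finset.mul_prod_erase _ _ (mem_univ ℓ)]
    rw [hW]; ring
  have hstep : ∀ i < r, X * S i = S (i + 1) := by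
    intro i hi
    rw [hSdef]
    simp only [Finset.mul_sum]
    have hterm : ∀ ℓ : Fin m, X * (C (μ ℓ * z ℓ ^ i) * Q ℓ)
        = C (μ ℓ * z ℓ ^ (i + 1)) * Q ℓ - C (μ ℓ * z ℓ ^ i) * W := by
      intro ℓ
      have : X * (C (μ ℓ * z ℓ ^ i) * Q ℓ) = C (μ ℓ * z ℓ ^ i) * (X * Q ℓ) := by ring
      rw [this, hXQ ℓ, mul_sub, ← mul_assoc, ← C_mul]
      ring_nf
    simp only [hterm]
    rw [Finset.sum_sub_distrib]
    have : ∑ ℓ, C (μ ℓ * z ℓ ^ i) * W = (∑ ℓ, C (μ ℓ * z ℓ ^ i)) * W := by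
      rw [Finset.sum_mul]
    rw [this, ← map_sum, hrmin i hi, map_zero, zero_mul, sub_zero]
  have hSr : S r = X ^ r * P := by
    have : ∀ i ≤ r, S i = X ^ i * P := by
      intro i hi
      induction i with
      | zero => simpa using hS0
      | succ n ih =>
        rw [← hstep n (lt_of_lt_of_le (Nat.lt_succ_self n) hi),
          ih (le_of_lt (lt_of_lt_of_le (Nat.lt_succ_self n) hi)), pow_succ]
        ring
    exact this r le_rfl
  -- top coefficient of S r
  have hSrcoeff : (S r).coeff (m - 1) = (-1) ^ (m - 1) * ∑ ℓ, μ ℓ * z ℓ ^ r := by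
    rw [hSdef]
    rw [Polynomial.finset_sum_coeff]
    simp only [coeff_C_mul, hQlc]
    rw [← Finset.sum_mul, mul_comm]
  have hSrne : (S r).coeff (m - 1) ≠ 0 := by
    rw [hSrcoeff]
    exact mul_ne_zero (pow_ne_zero _ (by norm_num : (-1:ℂ) ≠ 0)) hr
  have hSrdegle : (S r).degree ≤ ((m - 1 : ℕ) : WithBot ℕ) := by
    rw [hSdef]
    refine (Polynomial.degree_sum_le _ _).trans ?_
    rw [Finset.sup_le_iff]
    intro ℓ _
    calc (C (μ ℓ * z ℓ ^ r) * Q ℓ).degree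
        ≤ (C (μ ℓ * z ℓ ^ r)).degree + (Q ℓ).degree := degree_mul_le _ _
      _ ≤ 0 + (Q ℓ).degree := add_le_add degree_C_le le_rfl
      _ = (Q ℓ).degree := zero_add _
      _ = ((m - 1 : ℕ) : WithBot ℕ) := hQdegle ℓ
  have hSrdeg : (S r).degree = ((m - 1 : ℕ) : WithBot ℕ) :=
    degree_eq_of_le_of_coeff_ne_zero hSrdegle hSrne
  have hPne : P ≠ 0 := by
    intro h
    rw [h, mul_zero] at hSr
    rw [hSr, coeff_zero] at hSrne
    exact hSrne rfl
  have hdegXrP : (X ^ r * P).degree = ((m - 1 : ℕ) : WithBot ℕ) := by rw [← hSr]; exact hSrdeg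
  rw [degree_mul, degree_X_pow, degree_eq_natDegree hPne] at hdegXrP
  have hnat : r + P.natDegree = m - 1 := by
    have := hdegXrP
    rw [← Nat.cast_add] at this
    exact_mod_cast this
  have hrle : r ≤ m - 1 := le_of_le_of_eq (Nat.le_add_right r P.natDegree) hnat
  have hPdeg : P.natDegree = m - 1 - r := by omega
  constructor
  · rw [degree_eq_natDegree hPne, hPdeg]
  · have h1 : m - 1 = (m - 1 - r) + r := by omega
    have : (S r).coeff (m - 1) = P.coeff (m - 1 - r) := by
      rw [hSr, h1, coeff_X_pow_mul, Nat.add_sub_cancel]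
    rw [← this, hSrcoeff]
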